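/- arXiv:2004.03202 — 5 statements merged into one kernel-verified Lean document; each statement's English description precedes it below -/
import Mathlib

section
/- Let A = (a_ij) ∈ {0,1}^{n×n} be the symmetric adjacency matrix of a μ-dense network and let θ ∈ ℝⁿ be such that the matrix J(θ) is positive semidefinite. Then the squared magnitude of the unnormalized order parameter satisfies |r(θ)|² = Σ_{i,j} cos(θᵢ − θⱼ) ≥ (2μ − 3/2)n² + 2(1 − μ)n. -/
open Real Finset

noncomputable section

/-- The matrix `J(θ)` associated with adjacency matrix `A` and phases `θ`. -/
def kuraJ {n : ℕ} (A : Matrix (Fin n) (Fin n) ℝ) (θ : Fin n → ℝ) :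
    Matrix (Fin n) (Fin n) ℝ :=
  Matrix.of fun i j =>
    if i = j then ∑ k, A i k * Real.cos (θ i - θ k)
    else -(A i j * Real.cos (θ i - θ j))

lemma sum_sum_cos_eq (n : ℕ) (φ : Fin n → ℝ) :
    ∑ i, ∑ j, Real.cos (φ i - φ j) =
      (∑ i, Real.cos (φ i)) ^ 2 + (∑ i, Real.sin (φ i)) ^ 2 := by
  rw [sq, sq, Finset.sum_mul_sum, Finset.sum_mul_sum, ← Finset.sum_add_distrib]
  refine Finset.sum_congr rfl fun i _ => ?_
  rw [← Finset.sum_add_distrib]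
  exact Finset.sum_congr rfl fun j _ => by rw [Real.cos_sub]

lemma sum_sum_cos_nonneg (n : ℕ) (φ : Fin n → ℝ) :
    0 ≤ ∑ i, ∑ j, Real.cos (φ i - φ j) := by
  rw [sum_sum_cos_eq]; positivity

lemma kuraJ_quad (n : ℕ) (A : Matrix (Fin n) (Fin n) ℝ) (θ : Fin n → ℝ)
    (hAdiag : ∀ i, A i i = 0) (x : Fin n → ℝ) :
    dotProduct (star x) ((kuraJ A θ).mulVec x) =
      ∑ i, ∑ j, A i j * Real.cos (θ i - θ j) * (x i ^ 2 - x i * x j) := by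
  have hJ : ∀ i j, kuraJ A θ i j =
      (if i = j then ∑ k, A i k * Real.cos (θ i - θ k) else 0)
        - A i j * Real.cos (θ i - θ j) := by
    intro i j
    by_cases h : i = j
    · subst h; simp [kuraJ, hAdiag]
    · simp [kuraJ, h]
  have hrow : ∀ i, ∑ j, kuraJ A θ i j * x j =
      ∑ j, A i j * Real.cos (θ i - θ j) * (x i - x j) := by
    intro i
    calc ∑ j, kuraJ A θ i j * x j
        = ∑ j, ((if i = j then (∑ k, A i k * Real.cos (θ i - θ k)) * x j else 0)
            - A i j * Real.cos (θ i - θ j) * x j) := by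
          refine Finset.sum_congr rfl fun j _ => ?_
          rw [hJ i j]; by_cases h : i = j <;> simp [h] <;> ring
      _ = (∑ k, A i k * Real.cos (θ i - θ k)) * x i
            - ∑ j, A i j * Real.cos (θ i - θ j) * x j := by
          rw [Finset.sum_sub_distrib, Finset.sum_ite_eq]
          simp
      _ = ∑ j, A i j * Real.cos (θ i - θ j) * (x i - x j) := by
          rw [Finset.sum_mul]
          rw [← Finset.sum_sub_distrib]
          exact Finset.sum_congr rfl fun j _ => by ring
  have hdot : dotProduct (star x) ((kuraJ A θ).mulVec x)
      = ∑ i, x i * ∑ j, kuraJ A θ i j * x j := by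
    simp [dotProduct, Matrix.mulVec]
  rw [hdot]
  refine Finset.sum_congr rfl fun i _ => ?_
  rw [hrow i, Finset.mul_sum]
  exact Finset.sum_congr rfl fun j _ => by ring

/-- If `J(θ) ⪰ 0` on a μ-dense network, then the squared magnitude of the unnormalized order
parameter `r(θ) = Σ_j e^{iθ_j}` satisfies
`|r(θ)|² = Σ_{i,j} cos(θ_i − θ_j) ≥ (2μ − 3/2)n² + 2(1 − μ)n`. -/
theorem order_parameter_lower_bound
    (n : ℕ) (hn : 2 ≤ n) (A : Matrix (Fin n) (Fin n) ℝ)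
    (hA01 : ∀ i j, A i j = 0 ∨ A i j = 1) (hAsym : A.IsSymm) (hAdiag : ∀ i, A i i = 0)
    (μ : ℝ) (hμ0 : 0 ≤ μ) (hμ1 : μ ≤ 1)
    (hdense : ∀ i, μ * ((n : ℝ) - 1) ≤ ∑ j, A i j)
    (θ : Fin n → ℝ) (hpsd : (kuraJ A θ).PosSemidef) :
    ‖∑ j, Complex.exp ((θ j : ℂ) * Complex.I)‖ ^ 2 =
        ∑ i, ∑ j, Real.cos (θ i - θ j) ∧
    ∑ i, ∑ j, Real.cos (θ i - θ j) ≥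
        (2 * μ - 3 / 2) * (n : ℝ) ^ 2 + 2 * (1 - μ) * n := by
  have hA0 : ∀ i j, 0 ≤ A i j := fun i j => by rcases hA01 i j with h | h <;> rw [h] <;> norm_num
  have hA1 : ∀ i j, A i j ≤ 1 := fun i j => by rcases hA01 i j with h | h <;> rw [h] <;> norm_num
  -- Part 1: the modulus identity
  have part1 : ‖∑ j, Complex.exp ((θ j : ℂ) * Complex.I)‖ ^ 2 =
      ∑ i, ∑ j, Real.cos (θ i - θ j) := by
    rw [Complex.sq_norm, Complex.normSq_apply, sum_sum_cos_eq]
    rw [Complex.re_sum, Complex.im_sum]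
    simp only [Complex.exp_ofReal_mul_I_re, Complex.exp_ofReal_mul_I_im]
    ring
  refine ⟨part1, ?_⟩
  -- key inequality from PSD
  have hq1 := hpsd.dotProduct_mulVec_nonneg (fun i => Real.cos (θ i))
  have hq2 := hpsd.dotProduct_mulVec_nonneg (fun i => Real.sin (θ i))
  rw [kuraJ_quad n A θ hAdiag] at hq1 hq2
  have key : 0 ≤ ∑ i, ∑ j, A i j * Real.cos (θ i - θ j) * (1 - Real.cos (θ i - θ j)) := by
    have h : (0:ℝ) ≤ _ := add_nonneg hq1 hq2
    rw [← Finset.sum_add_distrib] at h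
    convert h using 1
    refine Finset.sum_congr rfl fun i _ => ?_
    rw [← Finset.sum_add_distrib]
    refine Finset.sum_congr rfl fun j _ => ?_
    rw [Real.cos_sub]
    linear_combination (-(A i j * (Real.cos (θ i) * Real.cos (θ j) + Real.sin (θ i) * Real.sin (θ j)))) * Real.sin_sq_add_cos_sq (θ i)
  -- Σ cos² ≥ n²/2
  have hcos2 : (n : ℝ) ^ 2 / 2 ≤ ∑ i, ∑ j, Real.cos (θ i - θ j) ^ 2 := by
    have h2 := sum_sum_cos_nonneg n (fun i => 2 * θ i)
    have hterm : ∀ i j : Fin n, Real.cos (θ i - θ j) ^ 2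
        = 1 / 2 + Real.cos (2 * θ i - 2 * θ j) / 2 := by
      intro i j
      rw [Real.cos_sq (θ i - θ j), mul_sub]
    have heq : ∑ i, ∑ j, Real.cos (θ i - θ j) ^ 2 =
        (n : ℝ) ^ 2 / 2 + (∑ i, ∑ j, Real.cos (2 * θ i - 2 * θ j)) / 2 := by
      calc ∑ i, ∑ j, Real.cos (θ i - θ j) ^ 2
          = ∑ i : Fin n, ∑ j : Fin n, (1 / 2 + Real.cos (2 * θ i - 2 * θ j) / 2) :=
            Finset.sum_congr rfl fun i _ => Finset.sum_congr rfl fun j _ => hterm i j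
        _ = (n : ℝ) ^ 2 / 2 + (∑ i, ∑ j, Real.cos (2 * θ i - 2 * θ j)) / 2 := by
            simp only [Finset.sum_add_distrib, Finset.sum_div, Finset.sum_const,
              Finset.card_univ, Fintype.card_fin, nsmul_eq_mul]
            ring
    rw [heq]
    linarith
  -- key rewritten: S2 ≤ S1
  have hkey2 : ∑ i, ∑ j, A i j * Real.cos (θ i - θ j) ^ 2
      ≤ ∑ i, ∑ j, A i j * Real.cos (θ i - θ j) := by
    have hrw : ∑ i, ∑ j, A i j * Real.cos (θ i - θ j) * (1 - Real.cos (θ i - θ j))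
        = (∑ i, ∑ j, A i j * Real.cos (θ i - θ j))
          - ∑ i, ∑ j, A i j * Real.cos (θ i - θ j) ^ 2 := by
      rw [← Finset.sum_sub_distrib]
      refine Finset.sum_congr rfl fun i _ => ?_
      rw [← Finset.sum_sub_distrib]
      exact Finset.sum_congr rfl fun j _ => by ring
    rw [hrw] at key
    linarith
  -- constants
  have e1 : ∑ _i : Fin n, ∑ _j : Fin n, (1 : ℝ) = (n : ℝ) ^ 2 := by
    simp [Finset.card_univ, sq]
  have e2 : ∑ i : Fin n, ∑ j : Fin n, (if i = j then (2 : ℝ) else 0) = 2 * (n : ℝ) := by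
    have h : ∀ i : Fin n, (∑ j : Fin n, if i = j then (2 : ℝ) else 0) = 2 := by
      intro i
      rw [Finset.sum_ite_eq]
      simp
    rw [Finset.sum_congr rfl fun i _ => h i, Finset.sum_const, Finset.card_univ,
      Fintype.card_fin, nsmul_eq_mul]
    ring
  -- T ≥ S1 + m − n² + 2n
  have hc : (∑ i, ∑ j, A i j * Real.cos (θ i - θ j)) - (n : ℝ) ^ 2
        + (∑ i, ∑ j, A i j) + 2 * n ≤ ∑ i, ∑ j, Real.cos (θ i - θ j) := by
    have hpt : ∀ i j : Fin n,
        A i j * Real.cos (θ i - θ j) - 1 + A i j + (if i = j then (2 : ℝ) else 0)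
          ≤ Real.cos (θ i - θ j) := by
      intro i j
      by_cases h : i = j
      · subst h
        simp only [hAdiag i]
        norm_num
      · simp only [h, if_neg, ite_false, add_zero]
        rcases hA01 i j with h0 | h0 <;> rw [h0]
        · have := Real.neg_one_le_cos (θ i - θ j); linarith
        · linarith
    have hsum := Finset.sum_le_sum
      (fun i (_ : i ∈ Finset.univ) => Finset.sum_le_sum (fun j (_ : j ∈ Finset.univ) => hpt i j))
    simp only [Finset.sum_add_distrib, Finset.sum_sub_distrib] at hsum
    rw [e2] at hsum
    have : ∑ _i : Fin n, ∑ _j : Fin n, (1 : ℝ) = (n : ℝ) ^ 2 := e1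
    linarith
  -- S2 ≥ SC2 + m − n²
  have hd : (∑ i, ∑ j, Real.cos (θ i - θ j) ^ 2) - (n : ℝ) ^ 2 + (∑ i, ∑ j, A i j)
      ≤ ∑ i, ∑ j, A i j * Real.cos (θ i - θ j) ^ 2 := by
    have hpt : ∀ i j : Fin n,
        Real.cos (θ i - θ j) ^ 2 - 1 + A i j ≤ A i j * Real.cos (θ i - θ j) ^ 2 := by
      intro i j
      have h1 : Real.cos (θ i - θ j) ^ 2 ≤ 1 := Real.cos_sq_le_one (θ i - θ j)
      have h2 := hA0 i j
      have h3 := hA1 i j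
      nlinarith
    have hsum := Finset.sum_le_sum
      (fun i (_ : i ∈ Finset.univ) => Finset.sum_le_sum (fun j (_ : j ∈ Finset.univ) => hpt i j))
    simp only [Finset.sum_add_distrib, Finset.sum_sub_distrib] at hsum
    have : ∑ _i : Fin n, ∑ _j : Fin n, (1 : ℝ) = (n : ℝ) ^ 2 := e1
    linarith
  -- density
  have hm : μ * (n : ℝ) * ((n : ℝ) - 1) ≤ ∑ i, ∑ j, A i j := by
    calc μ * (n : ℝ) * ((n : ℝ) - 1) = ∑ _i : Fin n, μ * ((n : ℝ) - 1) := by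
          rw [Finset.sum_const, Finset.card_univ, Fintype.card_fin, nsmul_eq_mul]; ring
      _ ≤ ∑ i, ∑ j, A i j := Finset.sum_le_sum fun i _ => hdense i
  nlinarith [hc, hd, hm, hcos2, hkey2]
end
end

section
/- Let A = (a_ij) ∈ {0,1}^{n×n} be the symmetric adjacency matrix of a μ-dense network with zero diagonal, K > 0, and let θ ∈ ℝⁿ be an equilibrium of the Kuramoto model, i.e., (K/n) Σⱼ a_ij sin(θᵢ − θⱼ) = ωᵢ for all i. Then for every index i, |Σ_{j=1}^n sin(θⱼ − θᵢ)| ≤ n K⁻¹ ‖ω‖_∞ + (1 − μ)(n − 1). Equivalently, writing r(θ) = Σⱼ e^{iθⱼ} = |r| e^{iψ}, one has |r(θ)| · |sin(ψ − θᵢ)| ≤ n K⁻¹ ‖ω‖_∞ + (1 − μ)(n − 1). -/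
open Real Finset

noncomputable section

/-- At any equilibrium of the Kuramoto model on a μ-dense network, for every index `i`,
`|Σ_j sin(θ_j − θ_i)| ≤ n K⁻¹ ‖ω‖_∞ + (1 − μ)(n − 1)`; equivalently, writing
`r(θ) = Σ_j e^{iθ_j} = |r| e^{iψ}`, one has
`|r(θ)|·|sin(ψ − θ_i)| ≤ n K⁻¹ ‖ω‖_∞ + (1 − μ)(n − 1)`. -/
theorem equilibrium_first_order_bound
    (n : ℕ) (hn : 2 ≤ n) (A : Matrix (Fin n) (Fin n) ℝ)
    (hA01 : ∀ i j, A i j = 0 ∨ A i j = 1) (hAsym : A.IsSymm) (hAdiag : ∀ i, A i i = 0)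
    (μ : ℝ) (hμ0 : 0 ≤ μ) (hμ1 : μ ≤ 1)
    (hdense : ∀ i, μ * ((n : ℝ) - 1) ≤ ∑ j, A i j)
    (K : ℝ) (hK : 0 < K) (ω : Fin n → ℝ)
    (θ : Fin n → ℝ)
    (heq : ∀ i, (K / n) * ∑ j, A i j * Real.sin (θ i - θ j) = ω i) :
    ∀ i,
      |∑ j, Real.sin (θ j - θ i)| ≤ (n : ℝ) * K⁻¹ * ‖ω‖ + (1 - μ) * ((n : ℝ) - 1) ∧
      ‖∑ j, Complex.exp ((θ j : ℂ) * Complex.I)‖ *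
          |Real.sin ((∑ j, Complex.exp ((θ j : ℂ) * Complex.I)).arg - θ i)| ≤
        (n : ℝ) * K⁻¹ * ‖ω‖ + (1 - μ) * ((n : ℝ) - 1) := by
  intro i
  have hn0 : (0:ℝ) < n := by positivity
  -- first bound
  have hS : ∑ j, Real.sin (θ j - θ i)
      = -((∑ j, A i j * Real.sin (θ i - θ j)) + ∑ j, (1 - A i j) * Real.sin (θ i - θ j)) := by
    rw [← Finset.sum_add_distrib, ← Finset.sum_neg_distrib]
    congr 1; ext j
    rw [← add_mul, show θ j - θ i = -(θ i - θ j) by ring, Real.sin_neg]; ring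
  have h1 : |∑ j, A i j * Real.sin (θ i - θ j)| ≤ (n:ℝ) * K⁻¹ * ‖ω‖ := by
    have := heq i
    have hsum : ∑ j, A i j * Real.sin (θ i - θ j) = (n / K) * ω i := by
      field_simp at this ⊢
      nlinarith [this]
    rw [hsum, abs_mul, abs_of_pos (by positivity : (0:ℝ) < n / K)]
    have : |ω i| ≤ ‖ω‖ := norm_le_pi_norm ω i
    calc (n / K) * |ω i| ≤ (n / K) * ‖ω‖ := by
          apply mul_le_mul_of_nonneg_left this (by positivity)
      _ = (n:ℝ) * K⁻¹ * ‖ω‖ := by ring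
  have h2 : |∑ j, (1 - A i j) * Real.sin (θ i - θ j)| ≤ (1 - μ) * ((n:ℝ) - 1) := by
    calc |∑ j, (1 - A i j) * Real.sin (θ i - θ j)|
        ≤ ∑ j, |(1 - A i j) * Real.sin (θ i - θ j)| := Finset.abs_sum_le_sum_abs _ _
      _ ≤ ∑ j, (if j = i then 0 else 1 - A i j) := by
          apply Finset.sum_le_sum
          intro j _
          by_cases hji : j = i
          · simp [hji, hAdiag]
          · simp only [hji, if_false]
            rw [abs_mul]
            have ha : 0 ≤ 1 - A i j := by rcases hA01 i j with h | h <;> simp [h]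
            calc |1 - A i j| * |Real.sin (θ i - θ j)| ≤ |1 - A i j| * 1 :=
                  mul_le_mul_of_nonneg_left (Real.abs_sin_le_one _) (abs_nonneg _)
              _ = 1 - A i j := by rw [mul_one, abs_of_nonneg ha]
      _ = ((n:ℝ) - 1) - ∑ j, A i j := by
          have hf : ∀ j, (if j = i then (0:ℝ) else 1 - A i j)
              = (1 - A i j) - (if j = i then 1 else 0) := by
            intro j; by_cases h : j = i <;> simp [h, hAdiag]
          rw [Finset.sum_congr rfl fun j _ => hf j, Finset.sum_sub_distrib,
            Finset.sum_sub_distrib, Finset.sum_const,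
            Finset.sum_ite_eq' Finset.univ i (fun _ => (1:ℝ))]
          simp [Finset.card_univ]
          ring
      _ ≤ ((n:ℝ) - 1) - μ * ((n:ℝ) - 1) := by linarith [hdense i]
      _ = (1 - μ) * ((n:ℝ) - 1) := by ring
  have key : |∑ j, Real.sin (θ j - θ i)| ≤ (n : ℝ) * K⁻¹ * ‖ω‖ + (1 - μ) * ((n : ℝ) - 1) := by
    rw [hS, abs_neg]
    calc |(∑ j, A i j * Real.sin (θ i - θ j)) + ∑ j, (1 - A i j) * Real.sin (θ i - θ j)|
        ≤ |∑ j, A i j * Real.sin (θ i - θ j)| + |∑ j, (1 - A i j) * Real.sin (θ i - θ j)| :=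
          abs_add_le _ _
      _ ≤ _ := add_le_add h1 h2
  refine ⟨key, ?_⟩
  -- second part
  set z : ℂ := ∑ j, Complex.exp ((θ j : ℂ) * Complex.I) with hz
  have him : (z * Complex.exp (-(θ i : ℂ) * Complex.I)).im = ∑ j, Real.sin (θ j - θ i) := by
    rw [hz, Finset.sum_mul, Complex.im_sum]
    congr 1; ext j
    rw [← Complex.exp_add]
    have : (θ j : ℂ) * Complex.I + -(θ i : ℂ) * Complex.I = ((θ j - θ i : ℝ) : ℂ) * Complex.I := by
      push_cast; ring
    rw [this, Complex.exp_mul_I]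
    simp only [Complex.add_im, Complex.mul_im, Complex.I_re, Complex.I_im,
      Complex.cos_ofReal_im, Complex.sin_ofReal_re, Complex.sin_ofReal_im,
      mul_zero, mul_one, zero_add, zero_mul, add_zero]
  have habs : ‖z‖ * |Real.sin (z.arg - θ i)|
      = |(z * Complex.exp (-(θ i : ℂ) * Complex.I)).im| := by
    conv_rhs => rw [← Complex.norm_mul_exp_arg_mul_I z]
    rw [mul_assoc, ← Complex.exp_add]
    have : (z.arg : ℂ) * Complex.I + -(θ i : ℂ) * Complex.I
        = ((z.arg - θ i : ℝ) : ℂ) * Complex.I := by push_cast; ring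
    rw [this, Complex.exp_mul_I]
    simp only [Complex.mul_im, Complex.add_im, Complex.add_re, Complex.I_re, Complex.I_im,
      Complex.ofReal_re, Complex.ofReal_im, Complex.cos_ofReal_im, Complex.sin_ofReal_re,
      Complex.sin_ofReal_im, Complex.cos_ofReal_re, mul_zero, mul_one, zero_add, zero_mul,
      add_zero, zero_sub, sub_zero]
    rw [abs_mul, abs_of_nonneg (norm_nonneg z)]
  rw [habs, him]
  exact key
end
end

section
/- Let A = (a_ij) ∈ {0,1}^{n×n} be the symmetric adjacency matrix of a μ-dense network with zero diagonal and K > 0. Suppose θ ∈ ℝⁿ is an equilibrium of the Kuramoto model with frequencies ω ((K/n) Σⱼ a_ij sin(θᵢ − θⱼ) = ωᵢ for all i) and J(θ) is positive semidefinite, and suppose (2μ − 3/2)n² + 2(1 − μ)n > 0. Then with ψ the phase of the order parameter r(θ) = Σⱼ e^{iθⱼ}, for every index i: |sin(θᵢ − ψ)| ≤ (n K⁻¹ ‖ω‖_∞ + (1 − μ)(n − 1)) / √((2μ − 3/2)n² + 2(1 − μ)n). -/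
open Real Finset

noncomputable section

lemma KST_sum_sum_cos_eq {n : ℕ} (φ : Fin n → ℝ) :
    ∑ j, ∑ k, Real.cos (φ j - φ k)
      = (∑ j, Real.cos (φ j)) ^ 2 + (∑ j, Real.sin (φ j)) ^ 2 := by
  rw [sq, sq, Finset.sum_mul_sum, Finset.sum_mul_sum, ← Finset.sum_add_distrib]
  refine Finset.sum_congr rfl fun j _ => ?_
  rw [← Finset.sum_add_distrib]
  exact Finset.sum_congr rfl fun k _ => by rw [Real.cos_sub]

lemma KST_quadform {n : ℕ} (A : Matrix (Fin n) (Fin n) ℝ) (θ : Fin n → ℝ)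
    (hAdiag : ∀ i, A i i = 0) (x : Fin n → ℝ) :
    dotProduct x (Matrix.mulVec (kuraJ A θ) x)
      = ∑ j, ∑ k, A j k * Real.cos (θ j - θ k) * (x j * x j - x j * x k) := by
  rw [show dotProduct x (Matrix.mulVec (kuraJ A θ) x)
      = ∑ j, x j * ∑ k, kuraJ A θ j k * x k from rfl]
  refine Finset.sum_congr rfl fun j _ => ?_
  have h1 : ∀ k, kuraJ A θ j k * x k
      = (if j = k then (∑ l, A j l * Real.cos (θ j - θ l)) * x k else 0)
        - A j k * Real.cos (θ j - θ k) * x k := by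
    intro k
    by_cases h : j = k
    · subst h; simp [kuraJ, hAdiag]
    · simp only [kuraJ, Matrix.of_apply, if_neg h]; ring
  have hrow : ∑ k, kuraJ A θ j k * x k
      = ∑ k, A j k * Real.cos (θ j - θ k) * (x j - x k) := by
    rw [Finset.sum_congr rfl fun k _ => h1 k, Finset.sum_sub_distrib,
      Finset.sum_ite_eq Finset.univ j (fun k => (∑ l, A j l * Real.cos (θ j - θ l)) * x k)]
    simp only [Finset.mem_univ, if_true]
    rw [Finset.sum_mul, ← Finset.sum_sub_distrib]
    exact Finset.sum_congr rfl fun k _ => by ring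
  rw [hrow, Finset.mul_sum]
  exact Finset.sum_congr rfl fun k _ => by ring

set_option maxHeartbeats 2000000 in
/-- At a stable equilibrium of the Kuramoto model on a μ-dense network, with `ψ` the phase of
the order parameter `r(θ) = Σ_j e^{iθ_j}`, for every `i`:
`|sin(θ_i − ψ)| ≤ (n K⁻¹‖ω‖_∞ + (1 − μ)(n − 1)) / √((2μ − 3/2)n² + 2(1 − μ)n)`. -/
theorem sin_phase_deviation_bound
    (n : ℕ) (hn : 2 ≤ n) (A : Matrix (Fin n) (Fin n) ℝ)
    (hA01 : ∀ i j, A i j = 0 ∨ A i j = 1) (hAsym : A.IsSymm) (hAdiag : ∀ i, A i i = 0)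
    (μ : ℝ) (hμ0 : 0 ≤ μ) (hμ1 : μ ≤ 1)
    (hdense : ∀ i, μ * ((n : ℝ) - 1) ≤ ∑ j, A i j)
    (K : ℝ) (hK : 0 < K) (ω : Fin n → ℝ)
    (θ : Fin n → ℝ)
    (heq : ∀ i, (K / n) * ∑ j, A i j * Real.sin (θ i - θ j) = ω i)
    (hpsd : (kuraJ A θ).PosSemidef)
    (hpos : 0 < (2 * μ - 3 / 2) * (n : ℝ) ^ 2 + 2 * (1 - μ) * n) :
    ∀ i,
      |Real.sin (θ i - (∑ j, Complex.exp ((θ j : ℂ) * Complex.I)).arg)| ≤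
        ((n : ℝ) * K⁻¹ * ‖ω‖ + (1 - μ) * ((n : ℝ) - 1)) /
          Real.sqrt ((2 * μ - 3 / 2) * (n : ℝ) ^ 2 + 2 * (1 - μ) * n) := by
  have hA0 : ∀ j k, 0 ≤ A j k := fun j k => by rcases hA01 j k with h | h <;> rw [h] <;> norm_num
  have hA1 : ∀ j k, A j k ≤ 1 := fun j k => by rcases hA01 j k with h | h <;> rw [h] <;> norm_num
  have hnR : (2 : ℝ) ≤ (n : ℝ) := by exact_mod_cast hn
  have hn0 : (n : ℝ) ≠ 0 := by linarith
  set r := ∑ j, Complex.exp ((θ j : ℂ) * Complex.I) with hr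
  set ψ := r.arg with hψ
  set ρ := ‖r‖ with hρ
  -- order parameter identities
  have hsum : ∑ j, Complex.exp (((θ j - ψ : ℝ) : ℂ) * Complex.I) = (ρ : ℂ) := by
    have h1 : ∀ j : Fin n, Complex.exp (((θ j - ψ : ℝ) : ℂ) * Complex.I)
        = Complex.exp ((θ j : ℂ) * Complex.I) * Complex.exp (-(ψ : ℂ) * Complex.I) := by
      intro j; rw [← Complex.exp_add]; push_cast; ring_nf
    rw [Finset.sum_congr rfl fun j _ => h1 j, ← Finset.sum_mul, ← hr]
    have h2 := Complex.norm_mul_exp_arg_mul_I r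
    rw [← hψ] at h2
    rw [← h2, mul_assoc, ← Complex.exp_add]
    simp [hρ]
  have hc : ∑ j, Real.cos (θ j - ψ) = ρ := by
    have := congrArg Complex.re hsum
    simpa [← Complex.ofReal_sub, Complex.exp_ofReal_mul_I_re] using this
  have hs : ∑ j, Real.sin (θ j - ψ) = 0 := by
    have := congrArg Complex.im hsum
    simpa [← Complex.ofReal_sub, Complex.exp_ofReal_mul_I_im] using this
  have hρ0 : 0 ≤ ρ := norm_nonneg _
  -- total degree
  set E : ℝ := ∑ j, ∑ k, A j k with hEdef
  have hE : (n : ℝ) * (μ * ((n : ℝ) - 1)) ≤ E := by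
    calc (n : ℝ) * (μ * ((n : ℝ) - 1)) = ∑ _j : Fin n, μ * ((n : ℝ) - 1) := by
          simp [Finset.sum_const, mul_comm]
    _ ≤ E := Finset.sum_le_sum fun j _ => hdense j
  -- PSD inequality: sum of quadratic forms in sin and cos deviations
  set m : ℝ := ∑ j, ∑ k, A j k * Real.cos (θ j - θ k) with hmdef
  have hq : ∑ j, ∑ k, A j k * Real.cos (θ j - θ k) * Real.cos (θ j - θ k) ≤ m := by
    have hqs : (0:ℝ) ≤ ∑ j, ∑ k, A j k * Real.cos (θ j - θ k) *
        (Real.sin (θ j - ψ) * Real.sin (θ j - ψ) - Real.sin (θ j - ψ) * Real.sin (θ k - ψ)) := by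
      rw [← KST_quadform A θ hAdiag]
      simpa using hpsd.dotProduct_mulVec_nonneg (fun j => Real.sin (θ j - ψ))
    have hqc : (0:ℝ) ≤ ∑ j, ∑ k, A j k * Real.cos (θ j - θ k) *
        (Real.cos (θ j - ψ) * Real.cos (θ j - ψ) - Real.cos (θ j - ψ) * Real.cos (θ k - ψ)) := by
      rw [← KST_quadform A θ hAdiag]
      simpa using hpsd.dotProduct_mulVec_nonneg (fun j => Real.cos (θ j - ψ))
    have hid : (∑ j, ∑ k, A j k * Real.cos (θ j - θ k) *
          (Real.sin (θ j - ψ) * Real.sin (θ j - ψ) - Real.sin (θ j - ψ) * Real.sin (θ k - ψ)))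
        + (∑ j, ∑ k, A j k * Real.cos (θ j - θ k) *
          (Real.cos (θ j - ψ) * Real.cos (θ j - ψ) - Real.cos (θ j - ψ) * Real.cos (θ k - ψ)))
        = m - ∑ j, ∑ k, A j k * Real.cos (θ j - θ k) * Real.cos (θ j - θ k) := by
      rw [hmdef, ← Finset.sum_sub_distrib, ← Finset.sum_add_distrib]
      refine Finset.sum_congr rfl fun j _ => ?_
      rw [← Finset.sum_sub_distrib, ← Finset.sum_add_distrib]
      refine Finset.sum_congr rfl fun k _ => ?_
      have h1 := Real.sin_sq_add_cos_sq (θ j - ψ)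
      have h2 : Real.cos (θ j - θ k)
          = Real.cos (θ j - ψ) * Real.cos (θ k - ψ) + Real.sin (θ j - ψ) * Real.sin (θ k - ψ) := by
        rw [← Real.cos_sub]; ring_nf
      linear_combination A j k * Real.cos (θ j - θ k) * h1 + A j k * Real.cos (θ j - θ k) * h2
    linarith [hqs, hqc, hid]
  -- second-harmonic bound
  have h2nd : E - (n : ℝ) ^ 2 ≤ ∑ j, ∑ k, A j k * Real.cos (2 * θ j - 2 * θ k) := by
    have hnn : (0:ℝ) ≤ ∑ j, ∑ k, Real.cos (2 * θ j - 2 * θ k) := by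
      have h := KST_sum_sum_cos_eq (fun j => 2 * θ j)
      rw [h]; positivity
    have hstep : ∑ j, ∑ k, (Real.cos (2 * θ j - 2 * θ k) - (1 - A j k))
        ≤ ∑ j, ∑ k, A j k * Real.cos (2 * θ j - 2 * θ k) := by
      refine Finset.sum_le_sum fun j _ => Finset.sum_le_sum fun k _ => ?_
      nlinarith [Real.neg_one_le_cos (2 * θ j - 2 * θ k), Real.cos_le_one (2 * θ j - 2 * θ k),
        hA0 j k, hA1 j k]
    have hsplit : ∑ j, ∑ k, (Real.cos (2 * θ j - 2 * θ k) - (1 - A j k))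
        = (∑ j, ∑ k, Real.cos (2 * θ j - 2 * θ k)) - ((n : ℝ) ^ 2 - E) := by
      have : ∀ j : Fin n, ∑ k, (Real.cos (2 * θ j - 2 * θ k) - (1 - A j k))
          = (∑ k, Real.cos (2 * θ j - 2 * θ k)) - ((n:ℝ) - ∑ k, A j k) := by
        intro j
        rw [Finset.sum_sub_distrib, Finset.sum_sub_distrib]
        simp
      rw [Finset.sum_congr rfl fun j _ => this j, Finset.sum_sub_distrib, Finset.sum_sub_distrib]
      simp only [Finset.sum_const, Finset.card_univ, Fintype.card_fin, nsmul_eq_mul, hEdef, sq]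
      try ring
    linarith [hstep, hsplit ▸ hstep, hnn,
      (by linarith [hsplit] : ∑ j, ∑ k, (Real.cos (2 * θ j - 2 * θ k) - (1 - A j k))
        = (∑ j, ∑ k, Real.cos (2 * θ j - 2 * θ k)) - ((n : ℝ) ^ 2 - E))]
  -- cos² in terms of second harmonic
  have hM2 : ∑ j, ∑ k, A j k * Real.cos (θ j - θ k) * Real.cos (θ j - θ k)
      = E / 2 + (∑ j, ∑ k, A j k * Real.cos (2 * θ j - 2 * θ k)) / 2 := by
    have : ∀ j k : Fin n, A j k * Real.cos (θ j - θ k) * Real.cos (θ j - θ k)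
        = A j k / 2 + A j k * Real.cos (2 * θ j - 2 * θ k) / 2 := by
      intro j k
      have h := Real.cos_sq (θ j - θ k)
      have h2 : 2 * (θ j - θ k) = 2 * θ j - 2 * θ k := by ring
      rw [h2] at h
      linear_combination A j k * h
    rw [Finset.sum_congr rfl fun j _ => Finset.sum_congr rfl fun k _ => this j k, hEdef,
      Finset.sum_div, Finset.sum_div, ← Finset.sum_add_distrib]
    refine Finset.sum_congr rfl fun j _ => ?_
    rw [Finset.sum_div, Finset.sum_div, ← Finset.sum_add_distrib]
  -- lower bound for ρ²
  have hrho2 : ρ ^ 2 = ∑ j, ∑ k, Real.cos (θ j - θ k) := by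
    have h := KST_sum_sum_cos_eq (fun j => θ j - ψ)
    have h' : ∑ j, ∑ k, Real.cos (θ j - θ k) = ∑ j, ∑ k, Real.cos (θ j - ψ - (θ k - ψ)) :=
      Finset.sum_congr rfl fun j _ => Finset.sum_congr rfl fun k _ => by ring_nf
    rw [h', h, hc, hs]; ring
  have hlow : m + (2 * (n:ℝ) - (n:ℝ) ^ 2 + E) ≤ ρ ^ 2 := by
    rw [hrho2]
    have hstep : ∑ j, ∑ k, (A j k * Real.cos (θ j - θ k)
          + (if j = k then (1:ℝ) else -(1 - A j k)))
        ≤ ∑ j, ∑ k, Real.cos (θ j - θ k) := by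
      refine Finset.sum_le_sum fun j _ => Finset.sum_le_sum fun k _ => ?_
      by_cases h : j = k
      · subst h; simp [hAdiag]
      · rw [if_neg h]
        nlinarith [Real.neg_one_le_cos (θ j - θ k), hA0 j k, hA1 j k]
    have hsplit : ∑ j, ∑ k, (A j k * Real.cos (θ j - θ k)
          + (if j = k then (1:ℝ) else -(1 - A j k)))
        = m + (2 * (n:ℝ) - (n:ℝ) ^ 2 + E) := by
      have e1 : ∀ j : Fin n, ∑ k, (A j k * Real.cos (θ j - θ k)
            + (if j = k then (1:ℝ) else -(1 - A j k)))
          = (∑ k, A j k * Real.cos (θ j - θ k)) + ((∑ k, (A j k - 1)) + 2) := by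
        intro j
        rw [Finset.sum_add_distrib]
        congr 1
        have e2 : ∀ k : Fin n, (if j = k then (1:ℝ) else -(1 - A j k))
            = (A j k - 1) + (if j = k then (2:ℝ) else 0) := by
          intro k; by_cases h : j = k
          · subst h; simp [hAdiag]; norm_num
          · simp [h]
        rw [Finset.sum_congr rfl fun k _ => e2 k, Finset.sum_add_distrib,
          Finset.sum_ite_eq Finset.univ j (fun _ => (2:ℝ))]
        simp
      rw [Finset.sum_congr rfl fun j _ => e1 j, Finset.sum_add_distrib, ← hmdef,
        Finset.sum_add_distrib]
      have e3 : ∑ j : Fin n, ∑ k : Fin n, (A j k - 1) = E - (n:ℝ) ^ 2 := by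
        rw [Finset.sum_congr rfl fun j _ => Finset.sum_sub_distrib (fun k => A j k) (fun _ => (1:ℝ)), Finset.sum_sub_distrib]
        simp [hEdef, sq]
      rw [e3]
      simp [Finset.sum_const, Finset.card_univ]
      ring
    rw [hsplit] at hstep
    linarith [hstep]
  have hD : (2 * μ - 3 / 2) * (n : ℝ) ^ 2 + 2 * (1 - μ) * n ≤ ρ ^ 2 := by
    have hprod : (n:ℝ) * (μ * ((n:ℝ) - 1)) = μ * (n:ℝ) ^ 2 - μ * (n:ℝ) := by ring
    linarith [hq, h2nd, hM2, hlow, hE, hprod]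
  -- conclusion, per index
  intro i
  have heqi : ∑ k, A i k * Real.sin (θ i - θ k) = (n : ℝ) / K * ω i := by
    have h := heq i
    field_simp at h ⊢
    linarith [h]
  have hexp : ∀ k : Fin n, Real.sin (θ i - θ k)
      = Real.sin (θ i - ψ) * Real.cos (θ k - ψ) - Real.cos (θ i - ψ) * Real.sin (θ k - ψ) := by
    intro k
    rw [show θ i - θ k = (θ i - ψ) - (θ k - ψ) by ring, Real.sin_sub]
  have h4 : ∑ k, Real.sin (θ i - θ k) = Real.sin (θ i - ψ) * ρ := by
    rw [Finset.sum_congr rfl fun k _ => hexp k, Finset.sum_sub_distrib,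
      ← Finset.mul_sum, ← Finset.mul_sum, hc, hs]
    ring
  have hkey : Real.sin (θ i - ψ) * ρ
      = (n : ℝ) / K * ω i + ∑ k, (1 - A i k) * Real.sin (θ i - θ k) := by
    rw [← h4, ← heqi, ← Finset.sum_add_distrib]
    exact Finset.sum_congr rfl fun k _ => by ring
  have hrest : |∑ k, (1 - A i k) * Real.sin (θ i - θ k)| ≤ (1 - μ) * ((n : ℝ) - 1) := by
    calc |∑ k, (1 - A i k) * Real.sin (θ i - θ k)|
        ≤ ∑ k, |(1 - A i k) * Real.sin (θ i - θ k)| := Finset.abs_sum_le_sum_abs _ _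
      _ ≤ ∑ k, ((1 - A i k) - if k = i then 1 else 0) := by
          refine Finset.sum_le_sum fun k _ => ?_
          by_cases h : k = i
          · subst h; simp [hAdiag]
          · rw [if_neg h, abs_mul, abs_of_nonneg (by linarith [hA1 i k] : (0:ℝ) ≤ 1 - A i k)]
            have h1 : |Real.sin (θ i - θ k)| ≤ 1 := Real.abs_sin_le_one _
            nlinarith [hA1 i k, abs_nonneg (Real.sin (θ i - θ k))]
      _ ≤ (1 - μ) * ((n : ℝ) - 1) := by
          rw [Finset.sum_sub_distrib, Finset.sum_sub_distrib,
            Finset.sum_ite_eq' Finset.univ i (fun _ => (1:ℝ))]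
          simp only [Finset.mem_univ, if_true, Finset.sum_const, Finset.card_univ,
            Fintype.card_fin, nsmul_eq_mul, mul_one]
          have := hdense i
          linarith
  have habs : |Real.sin (θ i - ψ)| * ρ
      ≤ (n : ℝ) * K⁻¹ * ‖ω‖ + (1 - μ) * ((n : ℝ) - 1) := by
    have e : |Real.sin (θ i - ψ)| * ρ = |Real.sin (θ i - ψ) * ρ| := by
      rw [abs_mul, abs_of_nonneg hρ0]
    rw [e, hkey]
    have hω : |ω i| ≤ ‖ω‖ := by
      simpa [Real.norm_eq_abs] using norm_le_pi_norm ω i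
    calc |(n : ℝ) / K * ω i + ∑ k, (1 - A i k) * Real.sin (θ i - θ k)|
        ≤ |(n : ℝ) / K * ω i| + |∑ k, (1 - A i k) * Real.sin (θ i - θ k)| := abs_add_le _ _
      _ ≤ (n : ℝ) * K⁻¹ * ‖ω‖ + (1 - μ) * ((n : ℝ) - 1) := by
          have h1 : |(n : ℝ) / K * ω i| = (n : ℝ) / K * |ω i| := by
            rw [abs_mul, abs_of_nonneg (by positivity : (0:ℝ) ≤ (n:ℝ) / K)]
          have h2 : (n : ℝ) / K * |ω i| ≤ (n : ℝ) / K * ‖ω‖ := by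
            apply mul_le_mul_of_nonneg_left hω (by positivity)
          have h3 : (n : ℝ) / K * ‖ω‖ = (n : ℝ) * K⁻¹ * ‖ω‖ := by ring
          linarith [hrest]
  have hsqrtle : Real.sqrt ((2 * μ - 3 / 2) * (n : ℝ) ^ 2 + 2 * (1 - μ) * n) ≤ ρ := by
    rw [show ρ = Real.sqrt (ρ ^ 2) from (Real.sqrt_sq hρ0).symm]
    exact Real.sqrt_le_sqrt hD
  have hsD : 0 < Real.sqrt ((2 * μ - 3 / 2) * (n : ℝ) ^ 2 + 2 * (1 - μ) * n) :=
    Real.sqrt_pos.mpr hpos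
  rw [le_div_iff₀ hsD]
  calc |Real.sin (θ i - ψ)| * Real.sqrt ((2 * μ - 3 / 2) * (n : ℝ) ^ 2 + 2 * (1 - μ) * n)
      ≤ |Real.sin (θ i - ψ)| * ρ :=
        mul_le_mul_of_nonneg_left hsqrtle (abs_nonneg _)
    _ ≤ (n : ℝ) * K⁻¹ * ‖ω‖ + (1 - μ) * ((n : ℝ) - 1) := habs
end
end

section
/- Let A = (a_ij) ∈ {0,1}^{n×n} be the symmetric adjacency matrix (zero diagonal) of a μ-dense network, K > 0, and ω ∈ ℝⁿ. Let θ ∈ ℝⁿ and let i ≠ j be indices such that θⱼ ≤ θ_k ≤ θᵢ for all k, with γ := θᵢ − θⱼ satisfying 0 < γ ≤ π/2. Then the difference of the Kuramoto vector fields at i and j satisfies (ωᵢ − (K/n) Σ_k a_ik sin(θᵢ − θ_k)) − (ωⱼ − (K/n) Σ_k a_jk sin(θⱼ − θ_k)) ≤ (maxₖ ωₖ − minₖ ωₖ) − (2μ − 1) K sin(γ). -/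
open Real Finset

private lemma sin_split_aux {a b : ℝ} (ha : 0 ≤ a) (hb : 0 ≤ b) (hab : a + b ≤ π/2) :
    Real.sin (a + b) ≤ Real.sin a + Real.sin b := by
  have hpi := Real.pi_pos
  have h1 := Real.sin_nonneg_of_nonneg_of_le_pi ha (by linarith)
  have h2 := Real.sin_nonneg_of_nonneg_of_le_pi hb (by linarith)
  rw [Real.sin_add]
  nlinarith [Real.cos_le_one a, Real.cos_le_one b]

/-- If `θ_i` is the largest phase and `θ_j` the smallest, with range `γ = θ_i − θ_j ∈ (0, π/2]`,
then the difference of the Kuramoto vector fields at `i` and `j` is at most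
`(max_k ω_k − min_k ω_k) − (2μ − 1) K sin γ` on a μ-dense network. -/
theorem vector_field_difference_bound
    (n : ℕ) (hn : 2 ≤ n) (A : Matrix (Fin n) (Fin n) ℝ)
    (hA01 : ∀ i j, A i j = 0 ∨ A i j = 1) (hAsym : A.IsSymm) (hAdiag : ∀ i, A i i = 0)
    (μ : ℝ) (hμ0 : 0 ≤ μ) (hμ1 : μ ≤ 1)
    (hdense : ∀ i, μ * ((n : ℝ) - 1) ≤ ∑ j, A i j)
    (K : ℝ) (hK : 0 < K) (ω : Fin n → ℝ)
    (θ : Fin n → ℝ) (i j : Fin n) (hij : i ≠ j)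
    (hmax : ∀ k, θ k ≤ θ i) (hmin : ∀ k, θ j ≤ θ k)
    (hγpos : 0 < θ i - θ j) (hγle : θ i - θ j ≤ π / 2) :
    (ω i - (K / n) * ∑ k, A i k * Real.sin (θ i - θ k)) -
        (ω j - (K / n) * ∑ k, A j k * Real.sin (θ j - θ k)) ≤
      (Finset.univ.sup' ⟨i, Finset.mem_univ i⟩ ω -
          Finset.univ.inf' ⟨i, Finset.mem_univ i⟩ ω) -
        (2 * μ - 1) * K * Real.sin (θ i - θ j) := by
  have hpi := Real.pi_pos
  have hn0 : (0:ℝ) < n := by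
    have : (2:ℝ) ≤ n := by exact_mod_cast hn
    linarith
  have hsγ : 0 ≤ Real.sin (θ i - θ j) :=
    Real.sin_nonneg_of_nonneg_of_le_pi hγpos.le (by linarith)
  set f : Fin n → ℝ :=
    fun k => A i k * Real.sin (θ i - θ k) + A j k * Real.sin (θ k - θ j) with hfdef
  set g : Fin n → ℝ :=
    fun k => f k - (A i k + A j k - 1) * Real.sin (θ i - θ j) with hgdef
  -- pointwise lower bound
  have hg : ∀ k, 0 ≤ g k := by
    intro k
    have hik : 0 ≤ Real.sin (θ i - θ k) :=
      Real.sin_nonneg_of_nonneg_of_le_pi (by linarith [hmax k]) (by linarith [hmin k])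
    have hkj : 0 ≤ Real.sin (θ k - θ j) :=
      Real.sin_nonneg_of_nonneg_of_le_pi (by linarith [hmin k]) (by linarith [hmax k])
    have key : Real.sin (θ i - θ j) ≤ Real.sin (θ i - θ k) + Real.sin (θ k - θ j) := by
      have h := sin_split_aux (a := θ i - θ k) (b := θ k - θ j)
        (by linarith [hmax k]) (by linarith [hmin k]) (by linarith)
      rwa [show (θ i - θ k) + (θ k - θ j) = θ i - θ j by ring] at h
    rcases hA01 i k with h1 | h1 <;> rcases hA01 j k with h2 | h2 <;>
      simp only [hgdef, hfdef, h1, h2] <;> ring_nf <;> nlinarith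
  have hAji : A j i = A i j := by
    have := hAsym.apply i j
    simpa [Matrix.transpose_apply] using this
  have hgi : g i = Real.sin (θ i - θ j) := by
    simp only [hgdef, hfdef, hAdiag i, hAji]
    ring_nf
  have hgj : g j = Real.sin (θ i - θ j) := by
    simp only [hgdef, hfdef, hAdiag j]
    ring_nf
  -- sum of g over universe is at least g i + g j
  have hsubset : ({i, j} : Finset (Fin n)) ⊆ Finset.univ := Finset.subset_univ _
  have hsumg : 2 * Real.sin (θ i - θ j) ≤ ∑ k, g k := by
    have h := Finset.sum_le_sum_of_subset_of_nonneg hsubset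
      (fun k _ _ => hg k)
    rw [Finset.sum_pair hij, hgi, hgj] at h
    linarith
  -- evaluate the sum of the subtracted part
  have hdeg : ∑ k, (A i k + A j k - 1) * Real.sin (θ i - θ j)
      = ((∑ k, A i k) + (∑ k, A j k) - n) * Real.sin (θ i - θ j) := by
    rw [← Finset.sum_mul]
    congr 1
    simp [Finset.sum_add_distrib, Finset.sum_sub_distrib, Finset.card_univ]
  have hsumgsplit : ∑ k, g k = (∑ k, f k) - ∑ k, (A i k + A j k - 1) * Real.sin (θ i - θ j) := by
    simp [hgdef, Finset.sum_sub_distrib]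
  have hdi := hdense i
  have hdj := hdense j
  have hfbound : (2 * μ - 1) * n * Real.sin (θ i - θ j) ≤ ∑ k, f k := by
    have h1 : (μ * (n - 1) + μ * (n - 1) - n) * Real.sin (θ i - θ j)
        ≤ ((∑ k, A i k) + (∑ k, A j k) - n) * Real.sin (θ i - θ j) := by
      apply mul_le_mul_of_nonneg_right _ hsγ
      linarith
    have h2 : (0:ℝ) ≤ (2 - 2*μ) * Real.sin (θ i - θ j) :=
      mul_nonneg (by linarith) hsγ
    nlinarith [hsumg, hsumgsplit, hdeg]
  -- relate f to the two sums in the goal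
  have hfsum : ∑ k, f k = (∑ k, A i k * Real.sin (θ i - θ k))
      - ∑ k, A j k * Real.sin (θ j - θ k) := by
    rw [← Finset.sum_sub_distrib]
    apply Finset.sum_congr rfl
    intro k _
    simp only [hfdef]
    rw [show θ j - θ k = -(θ k - θ j) by ring, Real.sin_neg]
    ring
  have hKn : 0 < K / n := by positivity
  have hc : (K / n) * ((2 * μ - 1) * n * Real.sin (θ i - θ j)) ≤ (K / n) * ∑ k, f k :=
    mul_le_mul_of_nonneg_left hfbound hKn.le
  have hc2 : (K / n) * ((2 * μ - 1) * n * Real.sin (θ i - θ j))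
      = (2 * μ - 1) * K * Real.sin (θ i - θ j) := by
    field_simp
  have hc3 : (K / n) * ∑ k, f k = (K / n) * (∑ k, A i k * Real.sin (θ i - θ k))
      - (K / n) * ∑ k, A j k * Real.sin (θ j - θ k) := by
    rw [hfsum, mul_sub]
  have hω1 : ω i ≤ Finset.univ.sup' ⟨i, Finset.mem_univ i⟩ ω :=
    Finset.le_sup' ω (Finset.mem_univ i)
  have hω2 : Finset.univ.inf' ⟨i, Finset.mem_univ i⟩ ω ≤ ω j :=
    Finset.inf'_le ω (Finset.mem_univ j)
  linarith
end

section
/- Consider the Kuramoto model on a connected network with symmetric adjacency matrix A ∈ {0,1}^{n×n}, coupling K > 0, and frequencies ω ∈ ℝⁿ with Σᵢ ωᵢ = 0. Let 0 < γ < π/2 and let θ : [0, ∞) → ℝⁿ be a twice-differentiable solution of θ̇ᵢ(t) = ωᵢ − (K/n) Σⱼ a_ij sin(θᵢ(t) − θⱼ(t)) that satisfies θ(t) ∈ Δ(γ) for all t ≥ 0. Then ‖θ̇(t)‖² ≤ exp(−2 n⁻¹ K cos(γ) λ₂(L) · t) · ‖θ̇(0)‖² for all t ≥ 0, where λ₂(L)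 > 0 is the second smallest eigenvalue of the graph Laplacian L. In particular ‖θ̇(t)‖ → 0 exponentially fast, i.e., the oscillators achieve exponential frequency synchronization. -/
open Real Finset

noncomputable section

/-- The second smallest eigenvalue of a symmetric matrix having `𝟙` in its kernel,
via the Courant–Fischer variational characterization. -/
def lambda2 {n : ℕ} (M : Matrix (Fin n) (Fin n) ℝ) : ℝ :=
  sInf { x : ℝ | ∃ v : Fin n → ℝ, (∑ i, v i) = 0 ∧ (∑ i, (v i) ^ 2) = 1 ∧
    x = ∑ i, ∑ j, v i * M i j * v j }

/-! ### Auxiliary lemmas -/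

section Aux

variable {n : ℕ}

/-- Rewriting `kuraJ` entries uniformly. -/
lemma kuraJ_apply (A : Matrix (Fin n) (Fin n) ℝ) (hAdiag : ∀ i, A i i = 0)
    (φ : Fin n → ℝ) (i j : Fin n) :
    kuraJ A φ i j =
      (if i = j then ∑ k, A i k * Real.cos (φ i - φ k) else 0)
        - A i j * Real.cos (φ i - φ j) := by
  unfold kuraJ
  simp only [Matrix.of_apply]
  by_cases h : i = j
  · subst h; simp [hAdiag i]
  · simp [h]

/-- First form of the quadratic form identity. -/
lemma Qform_eq' (A : Matrix (Fin n) (Fin n) ℝ) (hAdiag : ∀ i, A i i = 0)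
    (φ v : Fin n → ℝ) :
    (∑ i, ∑ j, v i * kuraJ A φ i j * v j)
      = ∑ i, v i * ∑ j, A i j * Real.cos (φ i - φ j) * (v i - v j) := by
  refine Finset.sum_congr rfl fun i _ => ?_
  have h1 : ∀ j, v i * kuraJ A φ i j * v j =
      (if i = j then v i * (∑ k, A i k * Real.cos (φ i - φ k)) * v j else 0)
        - v i * (A i j * Real.cos (φ i - φ j)) * v j := by
    intro j
    rw [kuraJ_apply A hAdiag]
    by_cases h : i = j <;> simp [h] <;> ring
  calc (∑ j, v i * kuraJ A φ i j * v j)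
      = ∑ j, ((if i = j then v i * (∑ k, A i k * Real.cos (φ i - φ k)) * v j else 0)
          - v i * (A i j * Real.cos (φ i - φ j)) * v j) :=
        Finset.sum_congr rfl fun j _ => h1 j
    _ = (v i * (∑ k, A i k * Real.cos (φ i - φ k)) * v i)
          - ∑ j, v i * (A i j * Real.cos (φ i - φ j)) * v j := by
        rw [Finset.sum_sub_distrib, Finset.sum_ite_eq]
        simp
    _ = ∑ j, (v i * (A i j * Real.cos (φ i - φ j)) * v i
          - v i * (A i j * Real.cos (φ i - φ j)) * v j) := by
        rw [Finset.sum_sub_distrib]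
        congr 1
        rw [Finset.mul_sum, Finset.sum_mul]
    _ = v i * ∑ j, A i j * Real.cos (φ i - φ j) * (v i - v j) := by
        rw [Finset.mul_sum]
        exact Finset.sum_congr rfl fun j _ => by ring

/-- Symmetric form of the quadratic form identity. -/
lemma Qform_eq (A : Matrix (Fin n) (Fin n) ℝ) (hAsym : A.IsSymm) (hAdiag : ∀ i, A i i = 0)
    (φ v : Fin n → ℝ) :
    (∑ i, ∑ j, v i * kuraJ A φ i j * v j)
      = (1/2) * ∑ i, ∑ j, A i j * Real.cos (φ i - φ j) * (v i - v j) ^ 2 := by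
  set c : Fin n → Fin n → ℝ := fun i j => A i j * Real.cos (φ i - φ j) with hc
  have hcsymm : ∀ i j, c j i = c i j := by
    intro i j
    simp only [hc]
    rw [hAsym.apply j i]
    congr 1
    rw [← Real.cos_neg]
    ring_nf
  have hQ : (∑ i, ∑ j, v i * kuraJ A φ i j * v j)
      = ∑ i, ∑ j, c i j * (v i - v j) * v i := by
    rw [Qform_eq' A hAdiag]
    refine Finset.sum_congr rfl fun i _ => ?_
    rw [Finset.mul_sum]
    exact Finset.sum_congr rfl fun j _ => by simp only [hc]; ring
  have hswap : (∑ i, ∑ j, c i j * (v i - v j) * v j)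
      = - ∑ i, ∑ j, c i j * (v i - v j) * v i := by
    calc (∑ i, ∑ j, c i j * (v i - v j) * v j)
        = ∑ j, ∑ i, c i j * (v i - v j) * v j := Finset.sum_comm
      _ = ∑ j, ∑ i, -(c j i * (v j - v i) * v j) := by
          refine Finset.sum_congr rfl fun j _ => Finset.sum_congr rfl fun i _ => ?_
          rw [hcsymm j i]; ring
      _ = - ∑ i, ∑ j, c i j * (v i - v j) * v i := by
          simp [Finset.sum_neg_distrib]
  have hexp : (∑ i, ∑ j, c i j * (v i - v j) ^ 2)
      = (∑ i, ∑ j, c i j * (v i - v j) * v i) - ∑ i, ∑ j, c i j * (v i - v j) * v j := by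
    rw [← Finset.sum_sub_distrib]
    refine Finset.sum_congr rfl fun i _ => ?_
    rw [← Finset.sum_sub_distrib]
    exact Finset.sum_congr rfl fun j _ => by ring
  rw [hQ]
  simp only [hc] at hexp hswap ⊢
  rw [hexp, hswap]
  ring

/-- Values in walks: a nonconstant function on a connected graph differs across some edge. -/
lemma exists_edge_of_walk {G : SimpleGraph (Fin n)} (x : Fin n → ℝ) :
    ∀ {i j : Fin n}, G.Walk i j → x i ≠ x j → ∃ a b, G.Adj a b ∧ x a ≠ x b := by
  intro i j w
  induction w with
  | nil => intro h; exact absurd rfl h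
  | @cons a b c hadj p ih =>
    intro hne
    by_cases hab : x a = x b
    · exact ih (by rw [← hab]; exact hne)
    · exact ⟨a, b, hadj, hab⟩

end Aux

/-- Variational facts about `lambda2` of the graph Laplacian of a connected graph. -/
lemma lambda2_facts (n : ℕ) (hn : 2 ≤ n) (A : Matrix (Fin n) (Fin n) ℝ)
    (hA01 : ∀ i j, A i j = 0 ∨ A i j = 1) (hAsym : A.IsSymm) (hAdiag : ∀ i, A i i = 0)
    (hconn : (SimpleGraph.fromRel fun i j => A i j = 1).Connected) :
    0 < lambda2 (kuraJ A (fun _ => 0)) ∧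
    ∀ v : Fin n → ℝ, (∑ i, v i) = 0 →
      lambda2 (kuraJ A (fun _ => 0)) * (∑ i, v i ^ 2) ≤
        ∑ i, ∑ j, v i * kuraJ A (fun _ => 0) i j * v j := by
  have hA0 : ∀ i j, 0 ≤ A i j := by
    intro i j; rcases hA01 i j with h | h <;> rw [h] <;> norm_num
  set M := kuraJ A (fun _ => 0) with hM
  set g : (Fin n → ℝ) → ℝ := fun v => ∑ i, ∑ j, v i * M i j * v j with hg
  set C : Set (Fin n → ℝ) := {v | (∑ i, v i) = 0 ∧ (∑ i, v i ^ 2) = 1} with hC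
  set S : Set ℝ := { x : ℝ | ∃ v : Fin n → ℝ, (∑ i, v i) = 0 ∧ (∑ i, (v i) ^ 2) = 1 ∧
    x = ∑ i, ∑ j, v i * M i j * v j } with hS
  have hlam : lambda2 M = sInf S := rfl
  -- the image description
  have hSeq : S = g '' C := by
    ext x
    constructor
    · rintro ⟨v, h1, h2, h3⟩; exact ⟨v, ⟨h1, h2⟩, h3.symm⟩
    · rintro ⟨v, ⟨h1, h2⟩, h3⟩; exact ⟨v, h1, h2, h3.symm⟩
  -- continuity
  have hgc : Continuous g := by
    refine continuous_finset_sum _ fun i _ => continuous_finset_sum _ fun j _ => ?_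
    exact ((continuous_apply i).mul continuous_const).mul (continuous_apply j)
  -- compactness of C
  have hCclosed : IsClosed C := by
    have h1 : IsClosed {v : Fin n → ℝ | (∑ i, v i) = 0} :=
      isClosed_eq (continuous_finset_sum _ fun i _ => continuous_apply i) continuous_const
    have h2 : IsClosed {v : Fin n → ℝ | (∑ i, v i ^ 2) = 1} :=
      isClosed_eq (continuous_finset_sum _ fun i _ => (continuous_apply i).pow 2)
        continuous_const
    exact h1.inter h2
  have hCbdd : Bornology.IsBounded C := by
    refine (Metric.isBounded_closedBall (x := (0 : Fin n → ℝ)) (r := 1)).subset ?_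
    intro v hv
    rw [Metric.mem_closedBall, dist_zero_right]
    rw [pi_norm_le_iff_of_nonneg zero_le_one]
    intro i
    rw [Real.norm_eq_abs, ← sq_le_one_iff_abs_le_one]
    calc v i ^ 2 ≤ ∑ k, v k ^ 2 :=
          Finset.single_le_sum (f := fun k => v k ^ 2) (fun k _ => sq_nonneg _) (mem_univ i)
      _ = 1 := hv.2
  have hCcompact : IsCompact C := Metric.isCompact_of_isClosed_isBounded hCclosed hCbdd
  -- nonemptiness of C
  have i0 : Fin n := ⟨0, by omega⟩
  have hCne : C.Nonempty := by
    set a : ℝ := (Real.sqrt 2)⁻¹ with ha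
    refine ⟨fun i => a * ((if i = (⟨0, by omega⟩ : Fin n) then 1 else 0)
      - (if i = (⟨1, by omega⟩ : Fin n) then 1 else 0)), ?_, ?_⟩
    · rw [← Finset.mul_sum, Finset.sum_sub_distrib]
      simp [Finset.sum_ite_eq']
    · have h01 : (⟨0, by omega⟩ : Fin n) ≠ (⟨1, by omega⟩ : Fin n) := by
        simp [Fin.ext_iff]
      have hpt : ∀ i : Fin n, (a * ((if i = (⟨0, by omega⟩ : Fin n) then 1 else 0)
          - (if i = (⟨1, by omega⟩ : Fin n) then 1 else 0))) ^ 2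
          = a ^ 2 * ((if i = (⟨0, by omega⟩ : Fin n) then 1 else 0)
            + (if i = (⟨1, by omega⟩ : Fin n) then 1 else 0)) := by
        intro i
        by_cases h0 : i = (⟨0, by omega⟩ : Fin n) <;>
          by_cases h1 : i = (⟨1, by omega⟩ : Fin n) <;>
            simp [h0, h1] <;> first | (exfalso; exact h01 (h0 ▸ h1 ▸ rfl)) | ring
      rw [Finset.sum_congr rfl fun i _ => hpt i]
      rw [← Finset.mul_sum, Finset.sum_add_distrib]
      simp only [Finset.sum_ite_eq', Finset.mem_univ, if_true]
      rw [ha, inv_pow, Real.sq_sqrt (by norm_num : (0:ℝ) ≤ 2)]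
      norm_num
  -- compactness of S and attainment
  have hSne : S.Nonempty := by
    rw [hSeq]; exact hCne.image g
  have hScompact : IsCompact S := by rw [hSeq]; exact hCcompact.image hgc
  have hSbdd : BddBelow S := hScompact.bddBelow
  have hmem : sInf S ∈ S := hScompact.sInf_mem hSne
  -- positivity
  have hpos : 0 < lambda2 M := by
    rw [hlam]
    obtain ⟨v, hv0, hv1, hveq⟩ := hmem
    rw [hveq, hM, Qform_eq A hAsym hAdiag]
    have hnc : ∃ i j, v i ≠ v j := by
      by_contra h
      push_neg at h
      have hz : ∀ i, v i = 0 := by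
        have : ∑ i, v i = ∑ _i : Fin n, v i0 := Finset.sum_congr rfl fun i _ => h i i0
        rw [this, Finset.sum_const, Finset.card_univ, Fintype.card_fin, nsmul_eq_mul] at hv0
        have hn0 : ((n : ℝ)) ≠ 0 := Nat.cast_ne_zero.mpr (by omega)
        intro i
        rw [h i i0]
        exact (mul_eq_zero.mp hv0).resolve_left hn0
      rw [Finset.sum_congr rfl fun i _ => by rw [hz i]] at hv1
      simp at hv1
    obtain ⟨i, j, hij⟩ := hnc
    obtain ⟨a, b, hadj, hvab⟩ :=
      exists_edge_of_walk v ((hconn.preconnected i j).some) hij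
    rw [SimpleGraph.fromRel_adj] at hadj
    have hab1 : A a b = 1 := by
      rcases hadj.2 with h | h
      · exact h
      · rw [← hAsym.apply a b]; exact h
    simp only [sub_self, Real.cos_zero, mul_one]
    have hsum : 0 < ∑ i, ∑ j, A i j * (v i - v j) ^ 2 := by
      rw [← Finset.sum_product']
      refine Finset.sum_pos' (fun p _ => ?_) ⟨(a, b), Finset.mem_univ _, ?_⟩
      · have := hA0 p.1 p.2
        have := sq_nonneg (v p.1 - v p.2)
        positivity
      · simp only [hab1, one_mul]
        have : v a - v b ≠ 0 := sub_ne_zero.mpr hvab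
        positivity
    linarith
  refine ⟨hpos, ?_⟩
  -- the variational bound
  intro v hv0
  by_cases hs : (∑ i, v i ^ 2) = 0
  · have hz : ∀ i, v i = 0 := by
      intro i
      have := (Finset.sum_eq_zero_iff_of_nonneg (fun i _ => sq_nonneg (v i))).mp hs i
        (mem_univ i)
      exact pow_eq_zero_iff (by norm_num) |>.mp this
    rw [hs]
    simp [hz]
  · have hspos : 0 < ∑ i, v i ^ 2 :=
      lt_of_le_of_ne (Finset.sum_nonneg fun i _ => sq_nonneg _) (Ne.symm hs)
    set s : ℝ := ∑ i, v i ^ 2 with hsdef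
    set r : ℝ := Real.sqrt s with hrdef
    have hrpos : 0 < r := Real.sqrt_pos.mpr hspos
    have hr2 : r * r = s := Real.mul_self_sqrt hspos.le
    set u : Fin n → ℝ := fun i => v i / r with hu
    have hu0 : (∑ i, u i) = 0 := by
      rw [hu]; simp only
      rw [← Finset.sum_div, hv0, zero_div]
    have hu1 : (∑ i, u i ^ 2) = 1 := by
      rw [hu]; simp only
      have : ∀ i : Fin n, (v i / r) ^ 2 = v i ^ 2 / s := by
        intro i; rw [div_pow, ← hr2]; ring_nf
      rw [Finset.sum_congr rfl fun i _ => this i, ← Finset.sum_div, ← hsdef, div_self hs]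
    have hgu : g u = g v / s := by
      rw [hg]; simp only
      have : ∀ i j : Fin n, u i * M i j * u j = v i * M i j * v j / s := by
        intro i j; rw [hu]; simp only; rw [← hr2]; field_simp
      rw [Finset.sum_congr rfl fun i _ => Finset.sum_congr rfl fun j _ => this i j]
      simp only [Finset.sum_div]
    have hle : lambda2 M ≤ g u := by
      rw [hlam]
      exact csInf_le hSbdd ⟨u, hu0, hu1, rfl⟩
    rw [hgu] at hle
    calc lambda2 M * s ≤ (g v / s) * s := by
          exact mul_le_mul_of_nonneg_right hle hspos.le
      _ = g v := by field_simp

/-! ### Main theorem -/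

/-- Exponential frequency synchronization: if a (twice-differentiable) solution of the
Kuramoto model on a connected network stays in `Δ(γ)` with `γ < π/2`, then
`‖θ̇(t)‖² ≤ exp(−2n⁻¹K cos γ · λ₂(L) · t)·‖θ̇(0)‖²` for all `t ≥ 0`, where `λ₂(L) > 0` is the
second smallest eigenvalue of the graph Laplacian. -/
theorem exponential_frequency_synchronization
    (n : ℕ) (hn : 2 ≤ n) (A : Matrix (Fin n) (Fin n) ℝ)
    (hA01 : ∀ i j, A i j = 0 ∨ A i j = 1) (hAsym : A.IsSymm) (hAdiag : ∀ i, A i i = 0)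
    (hconn : (SimpleGraph.fromRel fun i j => A i j = 1).Connected)
    (K : ℝ) (hK : 0 < K) (ω : Fin n → ℝ) (hω : ∑ i, ω i = 0)
    (γ : ℝ) (hγ0 : 0 < γ) (hγ : γ < π / 2)
    (θ dθ : ℝ → Fin n → ℝ)
    (hderiv : ∀ t, 0 ≤ t → ∀ i, HasDerivAt (fun s => θ s i) (dθ t i) t)
    (hsmooth : ∀ t, 0 ≤ t → ∀ i, DifferentiableAt ℝ (fun s => dθ s i) t)
    (hode : ∀ t, 0 ≤ t → ∀ i,
      dθ t i = ω i - (K / n) * ∑ j, A i j * Real.sin (θ t i - θ t j))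
    (hcoh : ∀ t, 0 ≤ t → ∀ i j, i ≠ j → |θ t i - θ t j| < γ) :
    0 < lambda2 (kuraJ A (fun _ => 0)) ∧
    ∀ t, 0 ≤ t →
      ∑ i, (dθ t i) ^ 2 ≤
        Real.exp (-2 * (n : ℝ)⁻¹ * K * Real.cos γ * lambda2 (kuraJ A (fun _ => 0)) * t) *
          ∑ i, (dθ 0 i) ^ 2 := by
  obtain ⟨hlpos, hlle⟩ := lambda2_facts n hn A hA01 hAsym hAdiag hconn
  refine ⟨hlpos, ?_⟩
  have hA0 : ∀ i j, 0 ≤ A i j := by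
    intro i j; rcases hA01 i j with h | h <;> rw [h] <;> norm_num
  have hn0 : (0:ℝ) < n := by
    have : (0:ℕ) < n := by omega
    exact_mod_cast this
  have hcosγ : 0 < Real.cos γ :=
    Real.cos_pos_of_mem_Ioo ⟨by linarith [Real.pi_pos], hγ⟩
  -- the frequency vector sums to zero
  have hsumdθ : ∀ t, 0 ≤ t → (∑ i, dθ t i) = 0 := by
    intro t ht
    have hanti : (∑ i, ∑ j, A i j * Real.sin (θ t i - θ t j)) = 0 := by
      have h1 : (∑ i, ∑ j, A i j * Real.sin (θ t i - θ t j))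
          = - ∑ i, ∑ j, A i j * Real.sin (θ t i - θ t j) := by
        calc (∑ i, ∑ j, A i j * Real.sin (θ t i - θ t j))
            = ∑ j, ∑ i, A i j * Real.sin (θ t i - θ t j) := Finset.sum_comm
          _ = ∑ j, ∑ i, -(A j i * Real.sin (θ t j - θ t i)) := by
              refine Finset.sum_congr rfl fun j _ => Finset.sum_congr rfl fun i _ => ?_
              rw [hAsym.apply j i]
              have : θ t i - θ t j = -(θ t j - θ t i) := by ring
              rw [this, Real.sin_neg]
              ring
          _ = - ∑ i, ∑ j, A i j * Real.sin (θ t i - θ t j) := by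
              simp [Finset.sum_neg_distrib]
      linarith
    calc (∑ i, dθ t i)
        = ∑ i, (ω i - (K / n) * ∑ j, A i j * Real.sin (θ t i - θ t j)) :=
          Finset.sum_congr rfl fun i _ => hode t ht i
      _ = (∑ i, ω i) - (K / n) * ∑ i, ∑ j, A i j * Real.sin (θ t i - θ t j) := by
          rw [Finset.sum_sub_distrib, ← Finset.mul_sum]
      _ = 0 := by rw [hω, hanti]; ring
  -- the derivative of dθ
  have hD : ∀ t, 0 ≤ t → ∀ i, HasDerivWithinAt (fun s => dθ s i)
      (-((K / n) * ∑ j, A i j * (Real.cos (θ t i - θ t j) * (dθ t i - dθ t j))))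
      (Set.Ici t) t := by
    intro t ht i
    have hsum : HasDerivAt (fun s => ∑ j, A i j * Real.sin (θ s i - θ s j))
        (∑ j, A i j * (Real.cos (θ t i - θ t j) * (dθ t i - dθ t j))) t :=
      HasDerivAt.fun_sum fun j _ => (((hderiv t ht i).sub (hderiv t ht j)).sin).const_mul (A i j)
    have hg : HasDerivAt (fun s => ω i - (K / n) * ∑ j, A i j * Real.sin (θ s i - θ s j))
        (-((K / n) * ∑ j, A i j * (Real.cos (θ t i - θ t j) * (dθ t i - dθ t j)))) t := by
      have := (hasDerivAt_const t (ω i)).fun_sub (hsum.const_mul (K / n))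
      simpa using this
    exact (hg.hasDerivWithinAt).congr (fun s hs => hode s (ht.trans hs) i) (hode t ht i)
  -- the energy function and its derivative
  set F : ℝ → ℝ := fun t => ∑ i, 2 * dθ t i *
    (-((K / n) * ∑ j, A i j * (Real.cos (θ t i - θ t j) * (dθ t i - dθ t j)))) with hF
  have hf : ∀ t, 0 ≤ t →
      HasDerivWithinAt (fun s => ∑ i, dθ s i ^ 2) (F t) (Set.Ici t) t := by
    intro t ht
    exact HasDerivWithinAt.fun_sum fun i _ => by simpa [pow_one] using (hD t ht i).fun_pow 2
  -- the derivative bound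
  set c : ℝ := -2 * (n : ℝ)⁻¹ * K * Real.cos γ * lambda2 (kuraJ A (fun _ => 0)) with hc
  have hbound : ∀ x, 0 ≤ x → F x ≤ c * (∑ i, dθ x i ^ 2) + 0 := by
    intro x hx
    -- rewrite F as a quadratic form
    have hQrw : F x = -(2 * K / n) *
        (∑ i, ∑ j, dθ x i * kuraJ A (θ x) i j * dθ x j) := by
      rw [Qform_eq' A hAdiag (θ x) (dθ x), hF]
      simp only
      rw [Finset.mul_sum]
      refine Finset.sum_congr rfl fun i _ => ?_
      have h2 : (∑ j, A i j * (Real.cos (θ x i - θ x j) * (dθ x i - dθ x j)))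
          = ∑ j, A i j * Real.cos (θ x i - θ x j) * (dθ x i - dθ x j) :=
        Finset.sum_congr rfl fun j _ => (mul_assoc _ _ _).symm
      rw [h2]
      ring
    -- quadratic form comparison with the Laplacian
    have hcomp : Real.cos γ * (∑ i, ∑ j, dθ x i * kuraJ A (fun _ => 0) i j * dθ x j)
        ≤ ∑ i, ∑ j, dθ x i * kuraJ A (θ x) i j * dθ x j := by
      rw [Qform_eq A hAsym hAdiag (θ x) (dθ x), Qform_eq A hAsym hAdiag (fun _ => 0) (dθ x)]
      simp only [sub_self, Real.cos_zero, mul_one]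
      have key : (∑ i, ∑ j, Real.cos γ * (A i j * (dθ x i - dθ x j) ^ 2))
          ≤ ∑ i, ∑ j, A i j * Real.cos (θ x i - θ x j) * (dθ x i - dθ x j) ^ 2 := by
        refine Finset.sum_le_sum fun i _ => Finset.sum_le_sum fun j _ => ?_
        by_cases hij : i = j
        · subst hij; simp
        · have hcos : Real.cos γ ≤ Real.cos (θ x i - θ x j) := by
            rw [← Real.cos_abs (θ x i - θ x j)]
            exact Real.cos_le_cos_of_nonneg_of_le_pi (abs_nonneg _)
              (by linarith [Real.pi_pos]) (hcoh x hx i j hij).le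
          nlinarith [mul_nonneg (sub_nonneg.mpr hcos)
            (mul_nonneg (hA0 i j) (sq_nonneg (dθ x i - dθ x j))), hA0 i j,
            sq_nonneg (dθ x i - dθ x j)]
      have hfact : (∑ i, ∑ j, Real.cos γ * (A i j * (dθ x i - dθ x j) ^ 2))
          = Real.cos γ * ∑ i, ∑ j, A i j * (dθ x i - dθ x j) ^ 2 := by
        simp only [Finset.mul_sum]
      linarith
    have hlow : lambda2 (kuraJ A (fun _ => 0)) * (∑ i, dθ x i ^ 2)
        ≤ ∑ i, ∑ j, dθ x i * kuraJ A (fun _ => 0) i j * dθ x j :=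
      hlle (dθ x) (hsumdθ x hx)
    have hchain : Real.cos γ * (lambda2 (kuraJ A (fun _ => 0)) * (∑ i, dθ x i ^ 2))
        ≤ ∑ i, ∑ j, dθ x i * kuraJ A (θ x) i j * dθ x j :=
      le_trans (mul_le_mul_of_nonneg_left hlow hcosγ.le) hcomp
    have hneg : -(2 * K / n) ≤ 0 := neg_nonpos.mpr (by positivity)
    calc F x = -(2 * K / n) * (∑ i, ∑ j, dθ x i * kuraJ A (θ x) i j * dθ x j) := hQrw
      _ ≤ -(2 * K / n) * (Real.cos γ * (lambda2 (kuraJ A (fun _ => 0)) * (∑ i, dθ x i ^ 2))) :=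
          mul_le_mul_of_nonpos_left hchain hneg
      _ = c * (∑ i, dθ x i ^ 2) + 0 := by rw [hc, div_eq_mul_inv]; ring
  -- Grönwall
  intro t ht
  have hcont : ContinuousOn (fun s => ∑ i, dθ s i ^ 2) (Set.Icc 0 t) := by
    intro x hx
    have hca : ContinuousAt (fun s => ∑ i, dθ s i ^ 2) x :=
      tendsto_finset_sum _ fun i _ => ((hsmooth x hx.1 i).continuousAt).pow 2
    exact hca.continuousWithinAt
  have hmain := le_gronwallBound_of_liminf_deriv_right_le (f := fun s => ∑ i, dθ s i ^ 2)
    (f' := F) (δ := ∑ i, dθ 0 i ^ 2) (K := c) (ε := 0) (a := 0) (b := t)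
    hcont
    (fun x hx r hr => (hf x hx.1).liminf_right_slope_le hr)
    le_rfl
    (fun x hx => hbound x hx.1)
    t ⟨ht, le_rfl⟩
  rw [gronwallBound_ε0, sub_zero, mul_comm] at hmain
  exact hmain
end
end
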